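/- Let p > q be primes with (p,q) ≠ (3,2). Then every group of order p·q^2 has a cyclic normal subgroup with cyclic quotient (i.e., is metacyclic). -/

import Mathlib

open Subgroup

/-- The automorphism group of a group of prime order is cyclic. -/
lemma aux_mulAut_cyclic {p : ℕ} [Fact p.Prime] (H : Type*) [Group H]
    (h : Nat.card H = p) : IsCyclic (MulAut H) := by
  subst h
  have : Finite H := Nat.finite_of_card_ne_zero (Fact.out (p := (Nat.card H).Prime)).pos.ne'
  have hc : IsCyclic H := isCyclic_of_prime_card rfl
  set n := Nat.card H with hn
  have : NeZero n := ⟨(Fact.out (p := n.Prime)).pos.ne'⟩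
  -- `(ZMod n)ˣ` is cyclic since `ZMod n` is a field
  haveI : IsCyclic (ZMod n)ˣ := inferInstance
  -- hom `AddAut (ZMod n) →* MulAut H`
  let e : Multiplicative (ZMod n) ≃* H := zmodCyclicMulEquiv hc
  exact isCyclic_of_surjective (IsCyclic.mulAutMulEquiv H).symm (MulEquiv.surjective _)

/-- A commutative group of order `p * q` with `p ≠ q` primes is cyclic. -/
lemma aux_cyclic_of_card_pq {p q : ℕ} (hp : p.Prime) (hq : q.Prime) (hne : p ≠ q)
    {H : Type*} [Group H] [Finite H] (hcomm : ∀ a b : H, a * b = b * a)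
    (hH : Nat.card H = p * q) : IsCyclic H := by
  haveI : Fact p.Prime := ⟨hp⟩
  haveI : Fact q.Prime := ⟨hq⟩
  obtain ⟨a, ha⟩ := exists_prime_orderOf_dvd_card' (G := H) p (by rw [hH]; exact ⟨q, rfl⟩)
  obtain ⟨b, hb⟩ := exists_prime_orderOf_dvd_card' (G := H) q (by rw [hH]; exact ⟨p, mul_comm p q⟩)
  have hco : (orderOf a).Coprime (orderOf b) := by
    rw [ha, hb]
    exact (Nat.coprime_primes hp hq).mpr hne
  have hab : Commute a b := hcomm a b
  have : orderOf (a * b) = p * q := by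
    rw [hab.orderOf_mul_eq_mul_orderOf_of_coprime hco, ha, hb]
  exact isCyclic_of_orderOf_eq_card (a * b) (by rw [this, hH])

theorem stmt_5 (p q : ℕ) (hp : p.Prime) (hq : q.Prime) (hpq : q < p)
    (hne : ¬ (p = 3 ∧ q = 2)) (G : Type) [Group G] [Finite G]
    (hG : Nat.card G = p * q ^ 2) :
    ∃ (N : Subgroup G) (_ : N.Normal), IsCyclic N ∧ IsCyclic (G ⧸ N) := by
  haveI : Fact p.Prime := ⟨hp⟩
  haveI : Fact q.Prime := ⟨hq⟩
  have hpq' : p ≠ q := (hpq.trans_le le_rfl).ne'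
  have hq0 : q ≠ 0 := hq.pos.ne'
  have hp0 : p ≠ 0 := hp.pos.ne'
  -- Sylow p-subgroup has order p
  obtain ⟨P⟩ : Nonempty (Sylow p G) := inferInstance
  have hfact : (Nat.card G).factorization p = 1 := by
    rw [hG, Nat.factorization_mul hp0 (pow_ne_zero 2 hq0), Nat.Prime.factorization hp,
      Nat.factorization_pow]
    simp [Nat.factorization_eq_zero_of_not_dvd, hq.factorization,
      Finsupp.single_apply, hpq'.symm]
  have hcardP : Nat.card P = p := by
    rw [Sylow.card_eq_multiplicity, hfact, pow_one]
  -- index of P is q^2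
  have hindexP : (P : Subgroup G).index = q ^ 2 := by
    have h1 := Subgroup.card_mul_index (P : Subgroup G)
    rw [hcardP, hG] at h1
    exact Nat.eq_of_mul_eq_mul_left hp.pos (by linarith [h1])
  -- P is normal via Sylow counting
  have hPnormal : (P : Subgroup G).Normal := by
    have hmod := card_sylow_modEq_one p G
    have hdvd : Nat.card (Sylow p G) ∣ q ^ 2 := hindexP ▸ P.card_dvd_index
    obtain ⟨k, hk2, hkeq⟩ := (Nat.dvd_prime_pow hq).mp hdvd
    have hq2' := hq.two_le
    have hp2' := hp.two_le
    have hone : Nat.card (Sylow p G) = 1 := by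
      rw [hkeq] at hmod ⊢
      interval_cases k
      · simp
      · exfalso
        rw [pow_one] at hmod
        have hdq : p ∣ q - 1 := (Nat.modEq_iff_dvd' (by omega)).mp hmod.symm
        have := Nat.le_of_dvd (by omega) hdq
        omega
      · exfalso
        have hdq : p ∣ q ^ 2 - 1 := (Nat.modEq_iff_dvd' (Nat.one_le_pow 2 q hq.pos)).mp hmod.symm
        have hfac : q ^ 2 - 1 = (q + 1) * (q - 1) := by
          have := Nat.sq_sub_sq q 1
          simpa using this
        rw [hfac] at hdq
        rcases hp.dvd_mul.mp hdq with h | h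
        · have := Nat.le_of_dvd (by omega) h
          have hpq1 : p = q + 1 := by omega
          have hq2 : q = 2 := by
            by_contra hq2
            have hodd : Odd q := hq.odd_of_ne_two hq2
            have h2 : 2 ∣ p := by
              rcases hodd with ⟨m, hm⟩
              exact ⟨m + 1, by omega⟩
            have := (Nat.Prime.eq_one_or_self_of_dvd hp 2 h2).resolve_left (by omega)
            omega
          exact hne ⟨by omega, hq2⟩
        · have := Nat.le_of_dvd (by omega) h
          omega
    rw [← Subgroup.normalizer_eq_top_iff]
    rw [← Subgroup.index_eq_one]
    exact (Sylow.card_eq_index_normalizer P).symm.trans hone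
  -- P is cyclic and commutative
  haveI hPcyc : IsCyclic P := isCyclic_of_prime_card hcardP
  haveI hPcomm : IsMulCommutative (P : Subgroup G) := by
    letI : CommGroup (P : Subgroup G) := IsCyclic.commGroup
    exact ⟨⟨fun a b => mul_comm a b⟩⟩
  -- the centralizer of P
  set C : Subgroup G := Subgroup.centralizer (P : Subgroup G) with hC
  have hPleC : (P : Subgroup G) ≤ C := Subgroup.le_centralizer _
  by_cases htop : C = ⊤
  · -- P is central; we show G is abelian
    have hPcenter : ((P : Subgroup G) : Set G) ⊆ Subgroup.center G :=
      Subgroup.centralizer_eq_top_iff_subset.mp htop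
    obtain ⟨Q⟩ : Nonempty (Sylow q G) := inferInstance
    have hfactq : (Nat.card G).factorization q = 2 := by
      rw [hG, Nat.factorization_mul hp0 (pow_ne_zero 2 hq0), Nat.Prime.factorization hp,
        Nat.factorization_pow, hq.factorization]
      simp [Finsupp.single_apply, hpq']
    have hcardQ : Nat.card Q = q ^ 2 := by
      rw [Sylow.card_eq_multiplicity, hfactq]
    have hQcomm : ∀ a b : Q, a * b = b * a := IsPGroup.commutative_of_card_eq_prime_sq hcardQ
    haveI hQcomm' : IsMulCommutative (Q : Subgroup G) := ⟨⟨fun a b => hQcomm a b⟩⟩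
    -- P ⊔ Q = ⊤
    have hsup : (P : Subgroup G) ⊔ (Q : Subgroup G) = ⊤ := by
      have h1 : Nat.card P ∣ Nat.card ((P : Subgroup G) ⊔ (Q : Subgroup G) : Subgroup G) :=
        Subgroup.card_dvd_of_le le_sup_left
      have h2 : Nat.card Q ∣ Nat.card ((P : Subgroup G) ⊔ (Q : Subgroup G) : Subgroup G) :=
        Subgroup.card_dvd_of_le le_sup_right
      have h3 : Nat.card ((P : Subgroup G) ⊔ (Q : Subgroup G) : Subgroup G) ∣ Nat.card G :=
        Subgroup.card_subgroup_dvd_card _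
      rw [hcardP] at h1
      rw [hcardQ] at h2
      have hco : Nat.Coprime p (q ^ 2) := (Nat.coprime_primes hp hq).mpr hpq' |>.pow_right 2
      have h4 : p * q ^ 2 ∣ Nat.card ((P : Subgroup G) ⊔ (Q : Subgroup G) : Subgroup G) :=
        hco.mul_dvd_of_dvd_of_dvd h1 h2
      rw [hG] at h3
      exact Subgroup.eq_top_of_card_eq _ (by rw [hG]; exact Nat.dvd_antisymm h3 h4)
    -- Q is central as well
    have hQcenter : ((Q : Subgroup G) : Set G) ⊆ Subgroup.center G := by
      rw [← Subgroup.centralizer_eq_top_iff_subset]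
      have hPc : (P : Subgroup G) ≤ Subgroup.centralizer (Q : Subgroup G) :=
        le_trans (fun x hx => hPcenter hx) (Subgroup.center_le_centralizer _)
      have hQc : (Q : Subgroup G) ≤ Subgroup.centralizer (Q : Subgroup G) :=
        Subgroup.le_centralizer _
      have := sup_le hPc hQc
      rw [hsup] at this
      exact top_le_iff.mp this
    have hcomm : ∀ a b : G, a * b = b * a := by
      have hcent : Subgroup.center G = ⊤ := by
        rw [eq_top_iff, ← hsup]
        exact sup_le (fun x hx => hPcenter hx) (fun x hx => hQcenter hx)
      intro a b
      have : a ∈ Subgroup.center G := hcent ▸ Subgroup.mem_top a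
      exact (Subgroup.mem_center_iff.mp this b).symm
    -- G abelian: find element of order p*q
    obtain ⟨a, ha⟩ := exists_prime_orderOf_dvd_card' (G := G) p (by rw [hG]; exact ⟨q ^ 2, rfl⟩)
    obtain ⟨b, hb⟩ := exists_prime_orderOf_dvd_card' (G := G) q
      (by rw [hG]; exact ⟨p * q, by ring⟩)
    have hco : (orderOf a).Coprime (orderOf b) := by
      rw [ha, hb]; exact (Nat.coprime_primes hp hq).mpr hpq'
    have hab : Commute a b := hcomm a b
    have hord : orderOf (a * b) = p * q := by
      rw [hab.orderOf_mul_eq_mul_orderOf_of_coprime hco, ha, hb]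
    have hnormal : (Subgroup.zpowers (a * b)).Normal := by
      refine ⟨fun n hn g => ?_⟩
      have : g * n * g⁻¹ = n := by rw [hcomm g n]; group
      rwa [this]
    haveI := hnormal
    refine ⟨Subgroup.zpowers (a * b), hnormal, ?_, ?_⟩
    · exact ⟨⟨⟨a * b, Subgroup.mem_zpowers _⟩, fun ⟨x, hx⟩ => by
        obtain ⟨k, hk⟩ := hx
        exact ⟨k, Subtype.ext (by simpa using hk)⟩⟩⟩
    · have hcards : Nat.card (Subgroup.zpowers (a * b)) = p * q := by
        rw [Nat.card_zpowers, hord]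
      have hq' : Nat.card (G ⧸ Subgroup.zpowers (a * b)) = q := by
        have h1 := Subgroup.card_eq_card_quotient_mul_card_subgroup (Subgroup.zpowers (a * b))
        rw [hcards, hG] at h1
        have : p * q ^ 2 = q * (p * q) := by ring
        rw [this] at h1
        exact Nat.eq_of_mul_eq_mul_right (Nat.mul_pos hp.pos hq.pos) h1.symm
      exact isCyclic_of_prime_card hq'
  · -- the centralizer C is a proper normal subgroup
    haveI : (P : Subgroup G).Characteristic := Sylow.characteristic_of_normal P hPnormal
    haveI hCchar : C.Characteristic := Subgroup.characteristic_centralizer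
    haveI hCnormal : C.Normal := inferInstance
    -- the conjugation map G →* MulAut P with kernel C
    have hker : (MulAut.conjNormal (G := G) (H := (P : Subgroup G))).ker = C := by
      ext x
      rw [MonoidHom.mem_ker, hC, Subgroup.mem_centralizer_iff]
      constructor
      · intro hx h hh
        have h1 : x * h * x⁻¹ = h := by
          have h2 := MulAut.conjNormal_apply (H := (P : Subgroup G)) x ⟨h, hh⟩
          rw [hx] at h2
          simpa using h2.symm
        conv_lhs => rw [← h1]
        group
      · intro hx
        refine MulEquiv.ext fun y => Subtype.ext ?_
        obtain ⟨h, hh⟩ := y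
        rw [MulAut.conjNormal_apply]
        have h2 := hx h hh
        simp only [MulAut.one_apply]
        rw [← h2]
        group
    haveI : IsCyclic (MulAut (P : Subgroup G)) := aux_mulAut_cyclic _ hcardP
    have hquotcyc : IsCyclic (G ⧸ C) := by
      haveI h1 : IsCyclic (G ⧸ (MulAut.conjNormal (G := G) (H := (P : Subgroup G))).ker) :=
        isCyclic_of_surjective
          (QuotientGroup.quotientKerEquivRange
            (MulAut.conjNormal (G := G) (H := (P : Subgroup G)))).symm
          (MulEquiv.surjective _)
      exact isCyclic_of_surjective (QuotientGroup.quotientMulEquivOfEq hker)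
        (MulEquiv.surjective _)
    -- card C = p or p * q
    have hpdvd : p ∣ Nat.card C := hcardP ▸ Subgroup.card_dvd_of_le hPleC
    have hCdvd : Nat.card C ∣ p * q ^ 2 := hG ▸ Subgroup.card_subgroup_dvd_card C
    have hCne : Nat.card C ≠ p * q ^ 2 := fun h => htop (Subgroup.eq_top_of_card_eq _ (by rw [hG, h]))
    obtain ⟨d, hd⟩ := hpdvd
    have hddvd : d ∣ q ^ 2 := by
      have : p * d ∣ p * q ^ 2 := hd ▸ hCdvd
      exact (mul_dvd_mul_iff_left hp0).mp this
    obtain ⟨k, hk2, hkeq⟩ := (Nat.dvd_prime_pow hq).mp hddvd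
    have hk1 : k ≤ 1 := by
      by_contra hk
      have : k = 2 := by omega
      subst this
      exact hCne (by rw [hd, hkeq])
    have hCcyc : IsCyclic C := by
      interval_cases k
      · rw [pow_zero] at hkeq
        rw [hkeq, mul_one] at hd
        exact isCyclic_of_prime_card (p := p) hd
      · rw [pow_one] at hkeq
        rw [hkeq] at hd
        -- C has order p * q; show C is abelian via its center containing P
        have hcardC : Nat.card C = p * q := hd
        -- image of P in C is central in C
        have hPsub : ((P : Subgroup G).subgroupOf C) ≤ Subgroup.center C := by
          intro x hx
          rw [Subgroup.mem_center_iff]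
          intro y
          exact Subtype.ext (by
            simpa using (y.2 (x : G) (Subgroup.mem_subgroupOf.mp hx)).symm)
        have hcardPsub : Nat.card ((P : Subgroup G).subgroupOf C) = p :=
          (Nat.card_congr (Subgroup.subgroupOfEquivOfLe hPleC).toEquiv).trans hcardP
        have hpdvdZ : p ∣ Nat.card (Subgroup.center C) :=
          hcardPsub ▸ Subgroup.card_dvd_of_le hPsub
        have hZdvd : Nat.card (Subgroup.center C) ∣ p * q :=
          hcardC ▸ Subgroup.card_subgroup_dvd_card _
        have hquotZ : Nat.card (C ⧸ Subgroup.center C) ∣ q := by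
          obtain ⟨m, hm⟩ := hpdvdZ
          have hmul : Nat.card (C ⧸ Subgroup.center C) * m * p = q * p := by
            have h1 := Subgroup.card_eq_card_quotient_mul_card_subgroup (Subgroup.center C)
            
            rw [hcardC, hm] at h1
            calc Nat.card (C ⧸ Subgroup.center C) * m * p
                = Nat.card (C ⧸ Subgroup.center C) * (p * m) := by ring
              _ = p * q := h1.symm
              _ = q * p := by ring
          exact ⟨m, (Nat.eq_of_mul_eq_mul_right hp.pos hmul).symm⟩
        have hCcomm : ∀ a b : C, a * b = b * a := by
          haveI hcyc : IsCyclic (C ⧸ Subgroup.center C) :=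
            isCyclic_of_card_dvd_prime hquotZ
          exact commutative_of_cyclic_center_quotient
            (QuotientGroup.mk' (Subgroup.center C)) (by rw [QuotientGroup.ker_mk'])
        exact aux_cyclic_of_card_pq hp hq hpq' hCcomm hcardC
    exact ⟨C, hCnormal, hCcyc, hquotcyc⟩
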